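/- For μ > 0, ∫_{ℝ²} e^{ω_μ(z)} ω_μ(z)² dz = 8π(4 log²μ − 4(log 8 − 2) log μ + log²8 − 4 log 8 + 8). -/

import Mathlib

open MeasureTheory Real Set Filter

/-- `ω_μ(z) = log(8μ²/(μ² + |z|²)²)`. -/
noncomputable def omega (μ : ℝ) (z : ℝ × ℝ) : ℝ :=
  Real.log (8 * μ ^ 2 / (μ ^ 2 + (z.1 ^ 2 + z.2 ^ 2)) ^ 2)

lemma radial_deriv (μ A : ℝ) (hμ : 0 < μ) (r : ℝ) :
    HasDerivAt (fun r : ℝ => -4 * μ ^ 2 * ((A - 2 * Real.log (μ ^ 2 + r ^ 2)) ^ 2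
        - 4 * (A - 2 * Real.log (μ ^ 2 + r ^ 2)) + 8) / (μ ^ 2 + r ^ 2))
      (8 * μ ^ 2 * r * (A - 2 * Real.log (μ ^ 2 + r ^ 2)) ^ 2 / (μ ^ 2 + r ^ 2) ^ 2) r := by
  have hu : (0:ℝ) < μ ^ 2 + r ^ 2 := by positivity
  have h1 : HasDerivAt (fun r : ℝ => μ ^ 2 + r ^ 2) (2 * r) r := by
    simpa using (hasDerivAt_pow 2 r).const_add (μ ^ 2)
  have h2 : HasDerivAt (fun r : ℝ => Real.log (μ ^ 2 + r ^ 2)) (2 * r / (μ ^ 2 + r ^ 2)) r :=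
    h1.log hu.ne'
  have hW : HasDerivAt (fun r : ℝ => A - 2 * Real.log (μ ^ 2 + r ^ 2))
      (-(2 * (2 * r / (μ ^ 2 + r ^ 2)))) r := (h2.const_mul 2).const_sub A
  have h3 : HasDerivAt (fun r : ℝ => -4 * μ ^ 2 * ((A - 2 * Real.log (μ ^ 2 + r ^ 2)) ^ 2
        - 4 * (A - 2 * Real.log (μ ^ 2 + r ^ 2)) + 8))
      (-4 * μ ^ 2 * ((2 : ℕ) * (A - 2 * Real.log (μ ^ 2 + r ^ 2)) ^ 1
          * (-(2 * (2 * r / (μ ^ 2 + r ^ 2))))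
        - 4 * (-(2 * (2 * r / (μ ^ 2 + r ^ 2)))))) r :=
    (((hW.pow 2).sub (hW.const_mul 4)).add_const 8).const_mul _
  have := h3.div h1 hu.ne'
  refine this.congr_deriv ?_
  field_simp
  ring

lemma radial_int (μ A : ℝ) (hμ : 0 < μ) :
    ∫ r in Ioi (0:ℝ), 8 * μ ^ 2 * r * (A - 2 * Real.log (μ ^ 2 + r ^ 2)) ^ 2 / (μ ^ 2 + r ^ 2) ^ 2
      = 4 * ((A - 2 * Real.log (μ ^ 2)) ^ 2 - 4 * (A - 2 * Real.log (μ ^ 2)) + 8) := by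
  have hμ2 : (0:ℝ) < μ ^ 2 := by positivity
  have htend : Tendsto (fun r : ℝ => -4 * μ ^ 2 * ((A - 2 * Real.log (μ ^ 2 + r ^ 2)) ^ 2
      - 4 * (A - 2 * Real.log (μ ^ 2 + r ^ 2)) + 8) / (μ ^ 2 + r ^ 2)) atTop (nhds 0) := by
    have hu : Tendsto (fun r : ℝ => μ ^ 2 + r ^ 2) atTop atTop :=
      tendsto_atTop_add_const_left _ _ (tendsto_pow_atTop two_ne_zero)
    have key : Tendsto (fun u : ℝ => -4 * μ ^ 2 * ((A - 2 * Real.log u) ^ 2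
        - 4 * (A - 2 * Real.log u) + 8) / u) atTop (nhds 0) := by
      have e : ∀ᶠ u : ℝ in atTop, -4 * μ ^ 2 * ((A - 2 * Real.log u) ^ 2
            - 4 * (A - 2 * Real.log u) + 8) / u
          = -4 * μ ^ 2 * (4 * (Real.log u ^ 2 / u) + (8 - 4 * A) * (Real.log u ^ 1 / u)
              + (A ^ 2 - 4 * A + 8) * (Real.log u ^ 0 / u)) := by
        filter_upwards [eventually_ne_atTop 0] with u hu
        rw [pow_zero, pow_one]
        field_simp
        ring
      rw [tendsto_congr' e]
      have l2 := Real.tendsto_pow_log_div_mul_add_atTop 1 0 2 one_ne_zero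
      have l1 := Real.tendsto_pow_log_div_mul_add_atTop 1 0 1 one_ne_zero
      have l0 := Real.tendsto_pow_log_div_mul_add_atTop 1 0 0 one_ne_zero
      simp only [one_mul, add_zero] at l2 l1 l0
      have := (((l2.const_mul 4).add (l1.const_mul (8 - 4 * A))).add
        (l0.const_mul (A ^ 2 - 4 * A + 8))).const_mul (-4 * μ ^ 2)
      simpa using this
    exact key.comp hu
  have := integral_Ioi_of_hasDerivAt_of_nonneg
    (g := fun r : ℝ => -4 * μ ^ 2 * ((A - 2 * Real.log (μ ^ 2 + r ^ 2)) ^ 2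
        - 4 * (A - 2 * Real.log (μ ^ 2 + r ^ 2)) + 8) / (μ ^ 2 + r ^ 2))
    (g' := fun r : ℝ => 8 * μ ^ 2 * r * (A - 2 * Real.log (μ ^ 2 + r ^ 2)) ^ 2
        / (μ ^ 2 + r ^ 2) ^ 2)
    ((radial_deriv μ A hμ 0).continuousAt.continuousWithinAt)
    (fun x _ => radial_deriv μ A hμ x)
    (fun x hx => by
      have hx0 : (0:ℝ) < x := hx
      have : (0:ℝ) < μ ^ 2 + x ^ 2 := by positivity
      positivity)
    htend
  rw [this]
  have h0 : μ ^ 2 + (0:ℝ) ^ 2 = μ ^ 2 := by norm_num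
  simp only [h0]
  field_simp
  ring

theorem stmt5 (μ : ℝ) (hμ : 0 < μ) :
    (∫ z : ℝ × ℝ, Real.exp (omega μ z) * omega μ z ^ 2)
      = 8 * π * (4 * Real.log μ ^ 2 - 4 * (Real.log 8 - 2) * Real.log μ
          + Real.log 8 ^ 2 - 4 * Real.log 8 + 8) := by
  have h8 : (0:ℝ) < 8 * μ ^ 2 := by positivity
  have key : ∀ z : ℝ × ℝ, Real.exp (omega μ z) * omega μ z ^ 2
      = 8 * μ ^ 2 / (μ ^ 2 + (z.1 ^ 2 + z.2 ^ 2)) ^ 2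
        * (Real.log (8 * μ ^ 2) - 2 * Real.log (μ ^ 2 + (z.1 ^ 2 + z.2 ^ 2))) ^ 2 := by
    intro z
    have hu : (0:ℝ) < μ ^ 2 + (z.1 ^ 2 + z.2 ^ 2) := by positivity
    have hpos : (0:ℝ) < 8 * μ ^ 2 / (μ ^ 2 + (z.1 ^ 2 + z.2 ^ 2)) ^ 2 := by positivity
    rw [omega, Real.exp_log hpos, Real.log_div h8.ne' (by positivity), Real.log_pow]
    push_cast
    ring
  simp only [key]
  rw [← integral_comp_polarCoord_symm]
  have key2 : ∀ p : ℝ × ℝ,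
      p.1 • (8 * μ ^ 2 / (μ ^ 2 + ((polarCoord.symm p).1 ^ 2 + (polarCoord.symm p).2 ^ 2)) ^ 2
        * (Real.log (8 * μ ^ 2)
          - 2 * Real.log (μ ^ 2 + ((polarCoord.symm p).1 ^ 2 + (polarCoord.symm p).2 ^ 2))) ^ 2)
      = 8 * μ ^ 2 * p.1 * (Real.log (8 * μ ^ 2)
          - 2 * Real.log (μ ^ 2 + p.1 ^ 2)) ^ 2 / (μ ^ 2 + p.1 ^ 2) ^ 2 := by
    intro p
    have hsq : (polarCoord.symm p).1 ^ 2 + (polarCoord.symm p).2 ^ 2 = p.1 ^ 2 := by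
      simp only [polarCoord_symm_apply]
      rw [mul_pow, mul_pow, ← mul_add, Real.cos_sq_add_sin_sq, mul_one]
    rw [hsq]
    simp only [smul_eq_mul, mul_one]
    ring
  simp only [key2]
  rw [polarCoord_target, Measure.volume_eq_prod, ← Measure.prod_restrict]
  refine Eq.trans (integral_fun_fst (f := fun r : ℝ => 8 * μ ^ 2 * r * (Real.log (8 * μ ^ 2)
      - 2 * Real.log (μ ^ 2 + r ^ 2)) ^ 2 / (μ ^ 2 + r ^ 2) ^ 2)) ?_
  rw [measureReal_def, Measure.restrict_apply_univ, Real.volume_Ioo, sub_neg_eq_add,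
    ENNReal.toReal_ofReal (by positivity : (0:ℝ) ≤ π + π), smul_eq_mul]
  rw [radial_int μ (Real.log (8 * μ ^ 2)) hμ]
  have hlog1 : Real.log (8 * μ ^ 2) = Real.log 8 + 2 * Real.log μ := by
    rw [Real.log_mul (by norm_num) (by positivity), Real.log_pow]
    push_cast; ring
  have hlog2 : Real.log (μ ^ 2) = 2 * Real.log μ := by
    rw [Real.log_pow]; push_cast; ring
  rw [hlog1, hlog2]
  ring
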